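/- Let G be a vertex-minimal counterexample to the claim that every planar graph with no 3-, 4-, or 6-cycles is (0, 45)-colorable (i.e., G is planar, has no cycles of length 3, 4, or 6, is not (0, 45)-colorable, and every such graph with fewer vertices is (0, 45)-colorable). Then every vertex of G of degree at most 46 has a neighbor of degree at least 47. -/

import Mathlib

open SimpleGraph

/-- `H` is a minor of `G`: branch sets are nonempty, connected, pairwise disjoint,
and edges of `H` are realized between branch sets. -/
def SimpleGraph.IsMinor {W V : Type*} (H : SimpleGraph W) (G : SimpleGraph V) : Prop :=
  ∃ f : W → Set V, (∀ w, (f w).Nonempty) ∧ (∀ w, (G.induce (f w)).Connected) ∧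
    (∀ w w', w ≠ w' → Disjoint (f w) (f w')) ∧
    (∀ w w', H.Adj w w' → ∃ a ∈ f w, ∃ b ∈ f w', G.Adj a b)

/-- A graph is planar iff it has no `K₅` minor and no `K₃,₃` minor (Wagner's theorem). -/
def SimpleGraph.Planar {V : Type*} (G : SimpleGraph V) : Prop :=
  ¬ (completeGraph (Fin 5)).IsMinor G ∧
    ¬ (completeBipartiteGraph (Fin 3) (Fin 3)).IsMinor G

/-- `G` contains no cycle of length `n` (as a subgraph). -/
def SimpleGraph.HasNoCycleOfLength {V : Type*} (G : SimpleGraph V) (n : ℕ) : Prop :=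
  ∀ (v : V) (w : G.Walk v v), w.IsCycle → w.length ≠ n

/-- `f` is a `(d 0, …, d (k-1))`-coloring of `G`: each vertex has at most `d (f v)`
neighbors in its own color class. -/
def SimpleGraph.IsDefectiveColoring {V : Type*} {k : ℕ} (G : SimpleGraph V)
    (d : Fin k → ℕ) (f : V → Fin k) : Prop :=
  ∀ v, {u | G.Adj v u ∧ f u = f v}.ncard ≤ d (f v)

/-- `G` is `(d 0, …, d (k-1))`-colorable. -/
def SimpleGraph.DefectiveColorable {V : Type*} {k : ℕ} (G : SimpleGraph V)
    (d : Fin k → ℕ) : Prop :=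
  ∃ f : V → Fin k, G.IsDefectiveColoring d f

noncomputable def induceInduceIso {V : Type*} (G : SimpleGraph V) (s : Set V) (t : Set s) :
    ((G.induce s).induce t) ≃g G.induce (Subtype.val '' t) where
  toEquiv := (Equiv.Set.image Subtype.val t Subtype.val_injective)
  map_rel_iff' := by
    intro a b
    simp [Equiv.Set.image, Equiv.Set.imageOfInjOn]

lemma minor_of_minor_induce {W V : Type*} {H : SimpleGraph W} {G : SimpleGraph V} {s : Set V}
    (h : H.IsMinor (G.induce s)) : H.IsMinor G := by
  obtain ⟨f, hne, hconn, hdisj, hedge⟩ := h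
  refine ⟨fun w => Subtype.val '' f w, fun w => (hne w).image _, fun w => ?_, ?_, ?_⟩
  · exact ((induceInduceIso G s (f w)).connected_iff).mp (hconn w)
  · intro w w' hww'
    exact (Set.disjoint_image_iff Subtype.val_injective).mpr (hdisj w w' hww')
  · intro w w' h
    obtain ⟨a, ha, b, hb, hab⟩ := hedge w w' h
    exact ⟨a, ⟨a, ha, rfl⟩, b, ⟨b, hb, rfl⟩, hab⟩

lemma hasNoCycle_induce {V : Type*} {G : SimpleGraph V} {n : ℕ} (s : Set V)
    (h : G.HasNoCycleOfLength n) : (G.induce s).HasNoCycleOfLength n := by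
  intro v w hw hl
  exact h v (w.map (Embedding.induce (G := G) s).toHom)
    (hw.map (Embedding.induce (G := G) s).injective) ((Walk.length_map _ w).trans hl)

lemma no_triangle {V : Type*} {G : SimpleGraph V} (h3 : G.HasNoCycleOfLength 3) {a b c : V}
    (hab : G.Adj a b) (hbc : G.Adj b c) (hca : G.Adj c a) : False := by
  apply h3 a (Walk.cons hab (Walk.cons hbc (Walk.cons hca Walk.nil))) ?_ rfl
  have h1 := hab.ne
  have h2 := hbc.ne
  have h3' := hca.ne
  have h4 := (hab.symm.ne : b ≠ a)
  simp [Walk.isCycle_def, Walk.isTrail_def, List.Nodup, Sym2.eq_iff]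
  tauto

theorem stmt10 (V : Type) [Fintype V] (G : SimpleGraph V)
    (hp : G.Planar) (h3 : G.HasNoCycleOfLength 3)
    (h4 : G.HasNoCycleOfLength 4) (h6 : G.HasNoCycleOfLength 6)
    (hnc : ¬ G.DefectiveColorable ![0, 45])
    (hmin : ∀ (W : Type) [Fintype W] (H : SimpleGraph W), H.Planar →
      H.HasNoCycleOfLength 3 → H.HasNoCycleOfLength 4 → H.HasNoCycleOfLength 6 →
      Fintype.card W < Fintype.card V → H.DefectiveColorable ![0, 45]) :
    ∀ v : V, (G.neighborSet v).ncard ≤ 46 →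
      ∃ u, G.Adj v u ∧ 47 ≤ (G.neighborSet u).ncard := by
  classical
  intro v hv
  by_contra hcon
  push_neg at hcon
  have hcon' : ∀ u, G.Adj v u → (G.neighborSet u).ncard ≤ 46 := by
    intro u hu; have := hcon u hu; omega
  apply hnc
  set s : Set V := {x | x ≠ v} with hs
  have hcard : Fintype.card s < Fintype.card V :=
    Fintype.card_subtype_lt (x := v) (fun h => h rfl)
  obtain ⟨f, hf⟩ := hmin s (G.induce s)
    ⟨fun h => hp.1 (minor_of_minor_induce h), fun h => hp.2 (minor_of_minor_induce h)⟩
    (hasNoCycle_induce s h3) (hasNoCycle_induce s h4) (hasNoCycle_induce s h6) hcard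
  have fin2 : ∀ a : Fin 2, a ≠ 1 → a = 0 := by decide
  have hd0 : (![0, 45] : Fin 2 → ℕ) 0 = 0 := rfl
  have hd1 : (![0, 45] : Fin 2 → ℕ) 1 = 45 := rfl
  -- the f-monochromatic neighborhood of a color-0 vertex is empty
  have hzero : ∀ x : s, f x = 0 → ∀ u : s, (G.induce s).Adj x u → f u ≠ 0 := by
    intro x hx u hadj hu
    have h0 := hf x
    rw [hx, hd0, Nat.le_zero, Set.ncard_eq_zero (Set.toFinite _)] at h0
    exact Set.eq_empty_iff_forall_notMem.mp h0 u ⟨hadj, hu⟩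
  -- bound for a vertex whose monochromatic neighbors all "come from f"
  have key1 : ∀ (g : V → Fin 2) (x : V) (hx : x ∈ s), f ⟨x, hx⟩ = 1 →
      ({u | G.Adj x u ∧ g u = 1} ⊆
        Subtype.val '' {u : s | (G.induce s).Adj ⟨x, hx⟩ u ∧ f u = f ⟨x, hx⟩}) →
      {u | G.Adj x u ∧ g u = 1}.ncard ≤ 45 := by
    intro g x hx hfx hsub
    calc {u | G.Adj x u ∧ g u = 1}.ncard
        ≤ (Subtype.val '' {u : s | (G.induce s).Adj ⟨x, hx⟩ u ∧ f u = f ⟨x, hx⟩}).ncard :=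
          Set.ncard_le_ncard hsub (Set.toFinite _)
      _ = {u : s | (G.induce s).Adj ⟨x, hx⟩ u ∧ f u = f ⟨x, hx⟩}.ncard :=
          Set.ncard_image_of_injective _ Subtype.val_injective
      _ ≤ 45 := by have := hf ⟨x, hx⟩; rw [hfx, hd1] at this; rwa [hfx]
  by_cases hA : ∀ u (h : u ∈ s), G.Adj v u → f ⟨u, h⟩ = 1
  · -- color v with 0
    refine ⟨fun x => if h : x ∈ s then f ⟨x, h⟩ else 0, ?_⟩
    intro x
    beta_reduce
    by_cases hx : x ∈ s
    · rw [dif_pos hx]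
      by_cases hfx : f ⟨x, hx⟩ = 1
      · rw [hfx, hd1]
        apply key1 _ x hx hfx
        intro u ⟨hadj, hcol⟩
        have hcol' : (if h : u ∈ s then f ⟨u, h⟩ else 0) = 1 := hcol
        have hu : u ∈ s := by
          by_contra h
          rw [dif_neg h] at hcol'
          exact (by decide : (0:Fin 2) ≠ 1) hcol'
        rw [dif_pos hu] at hcol'
        exact ⟨⟨u, hu⟩, ⟨hadj, by rw [hcol', hfx]⟩, rfl⟩
      · have hfx0 : f ⟨x, hx⟩ = 0 := fin2 _ hfx
        rw [hfx0, hd0, Nat.le_zero, Set.ncard_eq_zero (Set.toFinite _)]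
        ext u
        simp only [Set.mem_setOf_eq, Set.mem_empty_iff_false, iff_false, not_and]
        intro hadj hcol
        by_cases hu : u ∈ s
        · rw [dif_pos hu] at hcol
          exact hzero _ hfx0 ⟨u, hu⟩ hadj hcol
        · rw [show u = v from not_not.mp hu] at hadj
          exact hfx (hA x hx hadj.symm)
    · -- x = v
      rw [dif_neg hx]
      have hxv : x = v := not_not.mp hx
      rw [hd0, Nat.le_zero, Set.ncard_eq_zero (Set.toFinite _)]
      ext u
      simp only [Set.mem_setOf_eq, Set.mem_empty_iff_false, iff_false, not_and]
      intro hadj hcol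
      rw [hxv] at hadj
      have hu : u ∈ s := hadj.ne'
      rw [dif_pos hu] at hcol
      rw [hA u hu hadj] at hcol
      exact (by decide : (1:Fin 2) ≠ 0) hcol
  · push_neg at hA
    obtain ⟨u₀, hu₀s, hu₀adj, hu₀f⟩ := hA
    have hu₀0 : f ⟨u₀, hu₀s⟩ = 0 := fin2 _ hu₀f
    set Bad : V → Prop := fun x => ∃ h : x ∈ s, G.Adj v x ∧ f ⟨x, h⟩ = 1 ∧
      ∀ z : s, (G.induce s).Adj ⟨x, h⟩ z → f z = 1 with hBadDef
    refine ⟨fun x => if h : x ∈ s then (if Bad x then 0 else f ⟨x, h⟩) else 1, ?_⟩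
    intro x
    beta_reduce
    by_cases hx : x ∈ s
    · rw [dif_pos hx]
      by_cases hbx : Bad x
      · rw [if_pos hbx, hd0, Nat.le_zero, Set.ncard_eq_zero (Set.toFinite _)]
        obtain ⟨hx', hvx, hfx1, hall⟩ := hbx
        ext u
        simp only [Set.mem_setOf_eq, Set.mem_empty_iff_false, iff_false, not_and]
        intro hadj hcol
        by_cases hu : u ∈ s
        · rw [dif_pos hu] at hcol
          by_cases hbu : Bad u
          · obtain ⟨hu', hvu, _, _⟩ := hbu
            exact no_triangle h3 hvx hadj hvu.symm
          · rw [if_neg hbu] at hcol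
            rw [hall ⟨u, hu⟩ hadj] at hcol
            exact (by decide : (1:Fin 2) ≠ 0) hcol
        · rw [dif_neg hu] at hcol
          exact (by decide : (1:Fin 2) ≠ 0) hcol
      · by_cases hfx : f ⟨x, hx⟩ = 1
        · rw [if_neg hbx, hfx, hd1]
          by_cases hvx : G.Adj v x
          · have hnall : ¬ ∀ z : s, (G.induce s).Adj ⟨x, hx⟩ z → f z = 1 :=
              fun hall => hbx ⟨hx, hvx, hfx, hall⟩
            push_neg at hnall
            obtain ⟨z, hz, hfz⟩ := hnall
            have hgz : (if h : (z:V) ∈ s then (if Bad (z:V) then 0 else f ⟨(z:V), h⟩) else 1) ≠ 1 := by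
              rw [dif_pos z.2]
              split_ifs with hbz
              · exact (by decide : (0:Fin 2) ≠ 1)
              · rw [Subtype.coe_eta]; exact hfz
            have hsub : {u | G.Adj x u ∧
                (if h : u ∈ s then (if Bad u then 0 else f ⟨u, h⟩) else 1) = 1}
                ⊆ G.neighborSet x \ {(z:V)} := by
              intro u ⟨hadj, hcol⟩
              refine ⟨hadj, ?_⟩
              simp only [Set.mem_singleton_iff]
              intro h
              apply hgz
              rw [← h]
              exact hcol
            have h1 : (G.neighborSet x \ {(z:V)}).ncard = (G.neighborSet x).ncard - 1 :=
              Set.ncard_diff_singleton_of_mem hz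
            have h2 := Set.ncard_le_ncard hsub (Set.toFinite _)
            have h3' := hcon' x hvx
            omega
          · apply key1 _ x hx hfx
            intro u ⟨hadj, hcol⟩
            have hcol' : (if h : u ∈ s then (if Bad u then 0 else f ⟨u, h⟩) else 1) = 1 := hcol
            have hu : u ∈ s := by
              by_contra h
              rw [show u = v from not_not.mp h] at hadj
              exact hvx hadj.symm
            rw [dif_pos hu] at hcol'
            split_ifs at hcol' with hbu
            · exact absurd hcol' (by decide)
            · exact ⟨⟨u, hu⟩, ⟨hadj, by rw [hcol', hfx]⟩, rfl⟩
        · have hfx0 : f ⟨x, hx⟩ = 0 := fin2 _ hfx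
          rw [if_neg hbx, hfx0, hd0, Nat.le_zero, Set.ncard_eq_zero (Set.toFinite _)]
          ext u
          simp only [Set.mem_setOf_eq, Set.mem_empty_iff_false, iff_false, not_and]
          intro hadj hcol
          by_cases hu : u ∈ s
          · rw [dif_pos hu] at hcol
            by_cases hbu : Bad u
            · obtain ⟨hu', hvu, hfu1, hallu⟩ := hbu
              exact hfx (hallu ⟨x, hx⟩ hadj.symm)
            · rw [if_neg hbu] at hcol
              exact hzero _ hfx0 ⟨u, hu⟩ hadj hcol
          · rw [dif_neg hu] at hcol
            exact (by decide : (1:Fin 2) ≠ 0) hcol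
    · rw [dif_neg hx, hd1]
      have hxv : x = v := not_not.mp hx
      subst hxv
      have hsub : {u | G.Adj x u ∧
          (if h : u ∈ s then (if Bad u then 0 else f ⟨u, h⟩) else 1) = 1}
          ⊆ G.neighborSet x \ {u₀} := by
        intro u ⟨hadj, hcol⟩
        refine ⟨hadj, ?_⟩
        simp only [Set.mem_singleton_iff]
        intro h
        subst h
        rw [dif_pos hu₀s] at hcol
        split_ifs at hcol with hb
        · exact (by decide : (0:Fin 2) ≠ 1) hcol
        · rw [hu₀0] at hcol
          exact (by decide : (0:Fin 2) ≠ 1) hcol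
      have h1 : (G.neighborSet x \ {u₀}).ncard = (G.neighborSet x).ncard - 1 :=
        Set.ncard_diff_singleton_of_mem hu₀adj
      have h2 := Set.ncard_le_ncard hsub (Set.toFinite _)
      omega
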